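/- For every real constant C > 0 and every ε > 0, there exists δ₀ > 0 such that for all 0 < δ < δ₀, (1 − ε/4)/log(1/δ) ≤ ∫_{2δC}^∞ z·e^{−z}/log(z/(C·δ)) dz ≤ (1 + ε/4)/log(1/δ). -/

import Mathlib

open Filter Real MeasureTheory Set Topology

lemma aux_hasDerivAt (x : ℝ) :
    HasDerivAt (fun x => -((x + 1) * Real.exp (-x))) (x * Real.exp (-x)) x := by
  have h1 : HasDerivAt (fun x : ℝ => Real.exp (-x)) (Real.exp (-x) * (-1)) x :=
    (hasDerivAt_neg x).exp
  have h2 : HasDerivAt (fun x => -((x + 1) * Real.exp (-x)))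
      (-(1 * Real.exp (-x) + (id x + 1) * (Real.exp (-x) * -1))) x :=
    (((hasDerivAt_id x).add_const 1).mul h1).neg
  convert h2 using 1
  simp only [id_eq, id]
  ring

lemma aux_integrableOn_zexp : IntegrableOn (fun z : ℝ => z * Real.exp (-z)) (Ioi 0) := by
  have h := Real.GammaIntegral_convergent (s := 2) (by norm_num)
  have : (fun x : ℝ => Real.exp (-x) * x ^ ((2:ℝ) - 1)) = fun z : ℝ => z * Real.exp (-z) := by
    funext x
    norm_num [mul_comm]
  rwa [this] at h

lemma aux_tendsto : Tendsto (fun x : ℝ => -((x + 1) * Real.exp (-x))) atTop (𝓝 0) := by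
  have h1 := Real.tendsto_pow_mul_exp_neg_atTop_nhds_zero 1
  have h2 := Real.tendsto_exp_neg_atTop_nhds_zero
  have := (h1.add h2).neg
  simp only [pow_one, neg_zero, add_zero] at this
  convert this using 2 with x
  ring

lemma aux_integral_zexp (b : ℝ) (hb : 0 < b) :
    ∫ z in Ioi b, z * Real.exp (-z) = (b + 1) * Real.exp (-b) := by
  have h := integral_Ioi_of_hasDerivAt_of_tendsto
    (f := fun x => -((x + 1) * Real.exp (-x))) (f' := fun x => x * Real.exp (-x))
    (a := b) (m := 0)
    ((aux_hasDerivAt b).continuousAt.continuousWithinAt)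
    (fun x _ => aux_hasDerivAt x)
    (aux_integrableOn_zexp.mono_set (Ioi_subset_Ioi hb.le))
    aux_tendsto
  rw [h]; ring

set_option maxHeartbeats 1000000 in
theorem integral_z_exp_bounds (C ε : ℝ) (hC : 0 < C) (hε : 0 < ε) :
    ∃ δ₀ : ℝ, 0 < δ₀ ∧ ∀ δ : ℝ, 0 < δ → δ < δ₀ →
      (1 - ε / 4) / Real.log (1 / δ) ≤
          (∫ z in Set.Ioi (2 * δ * C), z * Real.exp (-z) / Real.log (z / (C * δ))) ∧
        (∫ z in Set.Ioi (2 * δ * C), z * Real.exp (-z) / Real.log (z / (C * δ))) ≤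
          (1 + ε / 4) / Real.log (1 / δ) := by
  set η : ℝ := min (ε / 32) (1 / 4) with hηdef
  have hη0 : 0 < η := lt_min (by positivity) (by norm_num)
  have hη4 : η ≤ 1 / 4 := min_le_right _ _
  have hηε : η ≤ ε / 32 := min_le_left _ _
  obtain ⟨M, hM1, hMtail⟩ : ∃ M : ℝ, 1 ≤ M ∧ (M + 1) * Real.exp (-M) ≤ η := by
    have h : Tendsto (fun x : ℝ => (x + 1) * Real.exp (-x)) atTop (𝓝 0) := by
      simpa using aux_tendsto.neg
    exact ((eventually_ge_atTop (1:ℝ)).and (h.eventually_le_const hη0)).exists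
  obtain ⟨T5, hT5⟩ : ∃ T5 : ℝ, ∀ L ≥ T5, L * Real.exp (-(2 * η * L)) ≤ ε / 8 * Real.log 2 := by
    have h1 : Tendsto (fun x : ℝ => x * Real.exp (-x) / (2 * η)) atTop (𝓝 0) := by
      simpa using (Real.tendsto_pow_mul_exp_neg_atTop_nhds_zero 1).div_const (2 * η)
    have h2 : Tendsto (fun L : ℝ => 2 * η * L) atTop atTop :=
      Tendsto.const_mul_atTop (by positivity) tendsto_id
    have h5 : Tendsto (fun L : ℝ => L * Real.exp (-(2 * η * L))) atTop (𝓝 0) := by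
      refine (h1.comp h2).congr fun L => ?_
      simp only [Function.comp_apply]
      field_simp
    exact eventually_atTop.mp
      (h5.eventually_le_const (by positivity : (0:ℝ) < ε / 8 * Real.log 2))
  set T : ℝ := max 1 (max T5 (max (2 * (1 + |Real.log (2 * C)|))
      ((|Real.log C| + Real.log M - Real.log η) / η))) with hTdef
  refine ⟨Real.exp (-T), Real.exp_pos _, fun δ hδ0 hδT => ?_⟩
  set L : ℝ := Real.log (1 / δ) with hLdef
  have hlogδ : Real.log δ = -L := by
    rw [hLdef, one_div, Real.log_inv, neg_neg]
  have hLT : T < L := by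
    have h := Real.log_lt_log hδ0 hδT
    rw [Real.log_exp, hlogδ] at h
    linarith
  have hL1 : 1 ≤ L := le_trans (le_max_left _ _) hLT.le
  have hL0 : 0 < L := lt_of_lt_of_le one_pos hL1
  have cond5 : L * Real.exp (-(2 * η * L)) ≤ ε / 8 * Real.log 2 :=
    hT5 L (le_trans (le_trans (le_max_left _ _) (le_max_right _ _)) hLT.le)
  have cond2 : Real.log (2 * C) < (1 - η) * L := by
    have h1 : 2 * (1 + |Real.log (2 * C)|) ≤ L :=
      le_trans (le_trans (le_trans (le_max_left _ _) (le_max_right _ _)) (le_max_right _ _)) hLT.le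
    have h2 : Real.log (2 * C) ≤ |Real.log (2 * C)| := le_abs_self _
    have h3 : (0:ℝ) ≤ |Real.log (2 * C)| := abs_nonneg _
    nlinarith
  have cond3 : |Real.log C| + Real.log M - Real.log η ≤ η * L := by
    have h1 : (|Real.log C| + Real.log M - Real.log η) / η ≤ L :=
      le_trans (le_trans (le_trans (le_max_right _ _) (le_max_right _ _)) (le_max_right _ _)) hLT.le
    calc |Real.log C| + Real.log M - Real.log η
        = η * ((|Real.log C| + Real.log M - Real.log η) / η) := by field_simp
      _ ≤ η * L := by nlinarith
  have hlogM : 0 ≤ Real.log M := Real.log_nonneg hM1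
  have hlogη : Real.log η ≤ 0 := Real.log_nonpos hη0.le (by linarith)
  have habs0 : (0:ℝ) ≤ |Real.log C| := abs_nonneg _
  have habsC : |Real.log C| ≤ η * L := by linarith
  set a : ℝ := Real.exp (-(η * L)) with hadef
  set b : ℝ := 2 * δ * C with hbdef
  have hδexp : δ = Real.exp (-L) := by rw [← hlogδ, Real.exp_log hδ0]
  have hb0 : 0 < b := by positivity
  have hba : b < a := by
    have hb' : b = Real.exp (Real.log (2 * C) + -L) := by
      rw [Real.exp_add, Real.exp_log (by positivity), ← hδexp]; ring
    rw [hb', hadef, Real.exp_lt_exp]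
    linarith
  have ha0 : 0 < a := Real.exp_pos _
  have haη : a ≤ η := by
    have h1 : -(η * L) ≤ Real.log η := by linarith
    calc a = Real.exp (-(η * L)) := hadef
      _ ≤ Real.exp (Real.log η) := Real.exp_le_exp.mpr h1
      _ = η := Real.exp_log hη0
  have ha1 : a ≤ 1 := by linarith
  have haM : a < M := by linarith
  have hCδ : 0 < C * δ := by positivity
  have hlog2 : (0:ℝ) < Real.log 2 := Real.log_pos (by norm_num)
  have hlogCδ : Real.log (C * δ) = Real.log C - L := by
    rw [Real.log_mul hC.ne' hδ0.ne', hlogδ]; ring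
  have hlogge2 : ∀ z : ℝ, b < z → Real.log 2 ≤ Real.log (z / (C * δ)) := by
    intro z hz
    apply Real.log_le_log (by norm_num)
    rw [le_div_iff₀ hCδ]
    calc (2:ℝ) * (C * δ) = b := by rw [hbdef]; ring
      _ ≤ z := hz.le
  have hlow : ∀ z : ℝ, a ≤ z → (1 - 2 * η) * L ≤ Real.log (z / (C * δ)) := by
    intro z hz
    have hz0 : 0 < z := lt_of_lt_of_le ha0 hz
    rw [Real.log_div hz0.ne' hCδ.ne', hlogCδ]
    have h1 : Real.log a ≤ Real.log z := Real.log_le_log ha0 hz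
    rw [hadef, Real.log_exp] at h1
    have h2 : Real.log C ≤ |Real.log C| := le_abs_self _
    linarith
  have hup : ∀ z : ℝ, 0 < z → z ≤ M → Real.log (z / (C * δ)) ≤ (1 + η) * L := by
    intro z hz0 hzM
    rw [Real.log_div hz0.ne' hCδ.ne', hlogCδ]
    have h1 : Real.log z ≤ Real.log M := Real.log_le_log hz0 hzM
    have h2 : -|Real.log C| ≤ Real.log C := neg_abs_le _
    linarith
  have h12η : (0:ℝ) < 1 - 2 * η := by linarith
  have hden : 0 < (1 - 2 * η) * L := by positivity
  have hmeas : AEStronglyMeasurable (fun z : ℝ => z * Real.exp (-z) / Real.log (z / (C * δ)))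
      (volume.restrict (Ioi b)) :=
    ((measurable_id.mul (Real.measurable_exp.comp measurable_neg)).div
      (Real.measurable_log.comp (measurable_id.div_const (C * δ)))).aestronglyMeasurable
  have hIzexp : IntegrableOn (fun z : ℝ => z * Real.exp (-z)) (Ioi b) :=
    aux_integrableOn_zexp.mono_set (Ioi_subset_Ioi hb0.le)
  have hIg : IntegrableOn (fun z : ℝ => z * Real.exp (-z) / Real.log (z / (C * δ))) (Ioi b) := by
    refine Integrable.mono' (hIzexp.div_const (Real.log 2)) hmeas ?_
    filter_upwards [ae_restrict_mem measurableSet_Ioi] with z hz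
    have hz0 : 0 < z := lt_trans hb0 hz
    have hnum : 0 ≤ z * Real.exp (-z) := by positivity
    have hlogz := hlogge2 z hz
    rw [Real.norm_eq_abs, abs_of_nonneg (div_nonneg hnum (by linarith))]
    exact div_le_div_of_nonneg_left hnum hlog2 hlogz
  have hgnonneg : ∀ z : ℝ, b < z → 0 ≤ z * Real.exp (-z) / Real.log (z / (C * δ)) := by
    intro z hz
    have hz0 : 0 < z := lt_trans hb0 hz
    exact div_nonneg (by positivity) (by linarith [hlogge2 z hz])
  constructor
  · -- lower bound
    have hsub : Ioc a M ⊆ Ioi b := fun z hz => lt_trans hba hz.1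
    have hmono : (∫ z in Ioc a M, z * Real.exp (-z) / Real.log (z / (C * δ)))
        ≤ ∫ z in Ioi b, z * Real.exp (-z) / Real.log (z / (C * δ)) := by
      refine setIntegral_mono_set hIg ?_ hsub.eventuallyLE
      filter_upwards [ae_restrict_mem measurableSet_Ioi] with z hz
      exact hgnonneg z hz
    have hptwise : ∀ z ∈ Ioc a M,
        z * Real.exp (-z) / ((1 + η) * L) ≤ z * Real.exp (-z) / Real.log (z / (C * δ)) := by
      intro z hz
      have hz0 : 0 < z := lt_of_lt_of_le ha0 hz.1.le
      have hzb : b < z := lt_trans hba hz.1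
      have h1 : 0 < Real.log (z / (C * δ)) := lt_of_lt_of_le hlog2 (hlogge2 z hzb)
      exact div_le_div_of_nonneg_left (by positivity) h1 (hup z hz0 hz.2)
    have hI1 : (∫ z in Ioc a M, z * Real.exp (-z) / ((1 + η) * L))
        ≤ ∫ z in Ioc a M, z * Real.exp (-z) / Real.log (z / (C * δ)) :=
      setIntegral_mono_on ((hIzexp.mono_set hsub).div_const _)
        (hIg.mono_set hsub) measurableSet_Ioc hptwise
    have hIzexpval : (∫ z in Ioc a M, z * Real.exp (-z))
        = (a + 1) * Real.exp (-a) - (M + 1) * Real.exp (-M) := by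
      have hIocM : IntegrableOn (fun z : ℝ => z * Real.exp (-z)) (Ioc a M) :=
        aux_integrableOn_zexp.mono_set (fun z hz => lt_of_lt_of_le ha0 hz.1.le)
      have hIoiM : IntegrableOn (fun z : ℝ => z * Real.exp (-z)) (Ioi M) :=
        aux_integrableOn_zexp.mono_set (Ioi_subset_Ioi (by linarith))
      have hu := setIntegral_union (f := fun z : ℝ => z * Real.exp (-z)) (μ := volume)
        (Ioc_disjoint_Ioi (le_refl M)) measurableSet_Ioi hIocM hIoiM
      rw [Ioc_union_Ioi_eq_Ioi haM.le] at hu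
      rw [aux_integral_zexp a ha0, aux_integral_zexp M (by linarith)] at hu
      linarith
    have hIconst : (∫ z in Ioc a M, z * Real.exp (-z) / ((1 + η) * L))
        = ((a + 1) * Real.exp (-a) - (M + 1) * Real.exp (-M)) / ((1 + η) * L) := by
      rw [integral_div, hIzexpval]
    have hlower : (1 - ε / 4) / L
        ≤ ((a + 1) * Real.exp (-a) - (M + 1) * Real.exp (-M)) / ((1 + η) * L) := by
      have hexpa : 1 - a ≤ Real.exp (-a) := by
        have := Real.add_one_le_exp (-a); linarith
      have hval : 1 - 2 * η ≤ (a + 1) * Real.exp (-a) - (M + 1) * Real.exp (-M) := by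
        have h4 : 0 ≤ (a + 1) * (Real.exp (-a) - (1 - a)) :=
          mul_nonneg (by linarith) (by linarith)
        nlinarith
      have hη1L : 0 < (1 + η) * L := by positivity
      rw [div_le_div_iff₀ hL0 hη1L]
      have key : (1 - ε / 4) * (1 + η) ≤ 1 - 2 * η := by nlinarith
      calc (1 - ε / 4) * ((1 + η) * L) = ((1 - ε / 4) * (1 + η)) * L := by ring
        _ ≤ (1 - 2 * η) * L := mul_le_mul_of_nonneg_right key hL0.le
        _ ≤ ((a + 1) * Real.exp (-a) - (M + 1) * Real.exp (-M)) * L :=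
            mul_le_mul_of_nonneg_right hval hL0.le
    calc (1 - ε / 4) / L ≤ _ := hlower
      _ = ∫ z in Ioc a M, z * Real.exp (-z) / ((1 + η) * L) := hIconst.symm
      _ ≤ ∫ z in Ioc a M, z * Real.exp (-z) / Real.log (z / (C * δ)) := hI1
      _ ≤ _ := hmono
  · -- upper bound
    have hsub1 : Ioc b a ⊆ Ioi b := Ioc_subset_Ioi_self
    have hsub2 : Ioi a ⊆ Ioi b := Ioi_subset_Ioi hba.le
    have hsplit : (∫ z in Ioi b, z * Real.exp (-z) / Real.log (z / (C * δ)))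
        = (∫ z in Ioc b a, z * Real.exp (-z) / Real.log (z / (C * δ)))
          + ∫ z in Ioi a, z * Real.exp (-z) / Real.log (z / (C * δ)) := by
      rw [← setIntegral_union (Ioc_disjoint_Ioi (le_refl a)) measurableSet_Ioi
        (hIg.mono_set hsub1) (hIg.mono_set hsub2), Ioc_union_Ioi_eq_Ioi hba.le]
    have hI1 : (∫ z in Ioc b a, z * Real.exp (-z) / Real.log (z / (C * δ)))
        ≤ a * a / Real.log 2 := by
      have hpt : ∀ z ∈ Ioc b a,
          z * Real.exp (-z) / Real.log (z / (C * δ)) ≤ a / Real.log 2 := by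
        intro z hz
        have hz0 : 0 < z := lt_trans hb0 hz.1
        have hnum : z * Real.exp (-z) ≤ a := by
          have h1 : Real.exp (-z) ≤ 1 := Real.exp_le_one_iff.mpr (by linarith)
          nlinarith [hz.2]
        exact div_le_div₀ ha0.le hnum hlog2 (hlogge2 z hz.1)
      calc (∫ z in Ioc b a, z * Real.exp (-z) / Real.log (z / (C * δ)))
          ≤ ∫ _z in Ioc b a, a / Real.log 2 :=
            setIntegral_mono_on (hIg.mono_set hsub1)
              (integrableOn_const (by rw [Real.volume_Ioc]; exact ENNReal.ofReal_ne_top))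
              measurableSet_Ioc hpt
        _ = (a - b) * (a / Real.log 2) := by
            rw [setIntegral_const, Real.volume_real_Ioc_of_le (by linarith),
              smul_eq_mul]
        _ ≤ a * a / Real.log 2 := by
            rw [mul_div_assoc]
            exact mul_le_mul_of_nonneg_right (by linarith) (by positivity)
    have hI2 : (∫ z in Ioi a, z * Real.exp (-z) / Real.log (z / (C * δ)))
        ≤ 1 / ((1 - 2 * η) * L) := by
      have hpt : ∀ z ∈ Ioi a,
          z * Real.exp (-z) / Real.log (z / (C * δ)) ≤ z * Real.exp (-z) / ((1 - 2 * η) * L) := by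
        intro z hz
        have hz0 : 0 < z := lt_trans ha0 hz
        exact div_le_div_of_nonneg_left (by positivity) hden (hlow z (le_of_lt hz))
      have hIa : IntegrableOn (fun z : ℝ => z * Real.exp (-z)) (Ioi a) :=
        aux_integrableOn_zexp.mono_set (Ioi_subset_Ioi ha0.le)
      have hle1 : (a + 1) * Real.exp (-a) ≤ 1 := by
        have h1 : Real.exp (-a) * Real.exp a = 1 := by rw [← Real.exp_add]; simp
        have h2 : a + 1 ≤ Real.exp a := Real.add_one_le_exp a
        have h3 : 0 < Real.exp (-a) := Real.exp_pos _
        nlinarith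
      calc (∫ z in Ioi a, z * Real.exp (-z) / Real.log (z / (C * δ)))
          ≤ ∫ z in Ioi a, z * Real.exp (-z) / ((1 - 2 * η) * L) :=
            setIntegral_mono_on (hIg.mono_set hsub2) (hIa.div_const _) measurableSet_Ioi hpt
        _ = ((a + 1) * Real.exp (-a)) / ((1 - 2 * η) * L) := by
            rw [integral_div, aux_integral_zexp a ha0]
        _ ≤ 1 / ((1 - 2 * η) * L) := div_le_div₀ (by norm_num) hle1 hden le_rfl
    have haa : a * a / Real.log 2 ≤ (ε / 8) / L := by
      have ha2 : a * a = Real.exp (-(2 * η * L)) := by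
        rw [hadef, ← Real.exp_add]; ring_nf
      rw [div_le_div_iff₀ hlog2 hL0, ha2]
      nlinarith [cond5]
    have h1L : 1 / ((1 - 2 * η) * L) ≤ (1 + ε / 8) / L := by
      rw [div_le_div_iff₀ hden hL0]
      have hcoef : (0:ℝ) ≤ ε / 8 - 2 * η - ε * η / 4 := by nlinarith
      nlinarith [mul_nonneg hcoef hL0.le]
    have hsum : (ε / 8) / L + (1 + ε / 8) / L = (1 + ε / 4) / L := by
      rw [← add_div]; ring_nf
    rw [hsplit]
    linarith
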